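/- Let v₁, …, vₙ be unit vectors in Euclidean space ℝ³ and p₁, …, pₙ ≥ 0 with ∑ pⱼ = 1, and set m = ‖∑ⱼ pⱼ·vⱼ‖. Then m ≤ 1 and −∑ⱼ pⱼ log₂ pⱼ ≥ −((1+m)/2)·log₂((1+m)/2) − ((1−m)/2)·log₂((1−m)/2). (The entropy of the key of a private quantum channel is bounded below by the von Neumann entropy of the averaged output state ρ⁰ whenever the plaintext set contains a pure state; here v₁, …, vₙ are the Bloch vectors of the unitarily rotated copies of a pure plaintext and m is the Bloch radius of ρ⁰, whose eigenvalues are (1±m)/2.) -/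

import Mathlib

open Finset Real
open scoped RealInnerProductSpace

private lemma aux_neg_mul_logb {x c : ℝ} (hx : 0 ≤ x) (hxc : x ≤ c) :
    -(x * Real.logb 2 c) ≤ -(x * Real.logb 2 x) := by
  rcases eq_or_lt_of_le hx with h | h
  · simp [← h]
  · have hl : Real.logb 2 x ≤ Real.logb 2 c :=
      Real.logb_le_logb_of_le one_lt_two h hxc
    nlinarith

theorem stmt_11 (n : ℕ) (v : Fin n → EuclideanSpace ℝ (Fin 3))
    (hv : ∀ j, ‖v j‖ = 1)
    (p : Fin n → ℝ) (hp : ∀ j, 0 ≤ p j) (hsum : ∑ j, p j = 1)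
    (m : ℝ) (hm : m = ‖∑ j, p j • v j‖) :
    m ≤ 1 ∧
    -(∑ j, p j * Real.logb 2 (p j)) ≥
      -((1 + m)/2) * Real.logb 2 ((1 + m)/2) - ((1 - m)/2) * Real.logb 2 ((1 - m)/2) := by
  have hm0 : 0 ≤ m := hm ▸ norm_nonneg _
  have hm1 : m ≤ 1 := by
    rw [hm]
    calc ‖∑ j, p j • v j‖ ≤ ∑ j, ‖p j • v j‖ := norm_sum_le _ _
      _ = ∑ j, p j := by
          refine Finset.sum_congr rfl fun j _ => ?_
          rw [norm_smul, hv j, mul_one, Real.norm_eq_abs, abs_of_nonneg (hp j)]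
      _ = 1 := hsum
  refine ⟨hm1, ?_⟩
  -- every p k is at most (1+m)/2
  have key : ∀ k, p k ≤ (1 + m) / 2 := by
    intro k
    have h1 : (inner ℝ (v k) (∑ j, p j • v j) : ℝ) ≤ m := by
      calc (inner ℝ (v k) (∑ j, p j • v j) : ℝ) ≤ ‖v k‖ * ‖∑ j, p j • v j‖ := real_inner_le_norm _ _
        _ = m := by rw [hv k, one_mul, hm]
    have h2 : (inner ℝ (v k) (∑ j, p j • v j) : ℝ) = ∑ j, p j * (inner ℝ (v k) (v j) : ℝ) := by
      rw [inner_sum]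
      exact Finset.sum_congr rfl fun j _ => real_inner_smul_right _ _ _
    have hkk : (inner ℝ (v k) (v k) : ℝ) = 1 := by
      rw [real_inner_self_eq_norm_sq, hv k]; norm_num
    have h3 : ∀ j ∈ univ.erase k, -(p j) ≤ p j * (inner ℝ (v k) (v j) : ℝ) := by
      intro j _
      have habs : |(inner ℝ (v k) (v j) : ℝ)| ≤ 1 := by
        have := abs_real_inner_le_norm (v k) (v j)
        rwa [hv k, hv j, one_mul] at this
      nlinarith [hp j, (abs_le.mp habs).1]
    have h4 : ∑ j ∈ univ.erase k, (-(p j)) ≤ ∑ j ∈ univ.erase k, p j * (inner ℝ (v k) (v j) : ℝ) :=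
      Finset.sum_le_sum h3
    have h5 : ∑ j ∈ univ.erase k, p j = 1 - p k := by
      have := Finset.add_sum_erase univ p (Finset.mem_univ k)
      linarith [this.symm ▸ hsum]
    have h6 : ∑ j, p j * (inner ℝ (v k) (v j) : ℝ)
        = p k + ∑ j ∈ univ.erase k, p j * (inner ℝ (v k) (v j) : ℝ) := by
      rw [← Finset.add_sum_erase univ _ (Finset.mem_univ k), hkk, mul_one]
    have h7 : ∑ j ∈ univ.erase k, (-(p j)) = -(1 - p k) := by
      rw [Finset.sum_neg_distrib, h5]
    linarith [h1, h2 ▸ h1]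
  -- rewrite RHS via binEntropy
  set t : ℝ := (1 + m) / 2 with ht
  have ht12 : (2:ℝ)⁻¹ ≤ t := by rw [ht]; linarith
  have ht1 : t ≤ 1 := by rw [ht]; linarith
  have hrw : -((1 + m)/2) * Real.logb 2 ((1 + m)/2) - ((1 - m)/2) * Real.logb 2 ((1 - m)/2)
      = Real.binEntropy t / Real.log 2 := by
    have h1m : (1:ℝ) - t = (1 - m) / 2 := by rw [ht]; ring
    rw [Real.binEntropy, Real.log_inv, Real.log_inv, h1m, ← ht, Real.logb, Real.logb]
    ring
  rw [hrw]
  have hlog2 : (0:ℝ) < Real.log 2 := Real.log_pos one_lt_two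
  -- nonempty
  have hn : (univ : Finset (Fin n)).Nonempty := by
    by_contra h
    rw [Finset.not_nonempty_iff_eq_empty] at h
    rw [h, Finset.sum_empty] at hsum
    norm_num at hsum
  obtain ⟨k₀, -, hk₀⟩ := Finset.exists_max_image univ p hn
  have hk₀' : ∀ j, p j ≤ p k₀ := fun j => hk₀ j (Finset.mem_univ j)
  have hMpos : 0 < p k₀ := by
    by_contra h
    push_neg at h
    have : ∑ j, p j ≤ 0 := Finset.sum_nonpos fun j _ => le_trans (hk₀' j) h
    linarith
  have hsum' : -(∑ j, p j * Real.logb 2 (p j)) = ∑ j, -(p j * Real.logb 2 (p j)) := by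
    rw [← Finset.sum_neg_distrib]
  rcases le_or_gt (p k₀) 2⁻¹ with hM | hM
  · -- case max ≤ 1/2 : entropy ≥ 1 ≥ RHS
    have hge1 : (1:ℝ) ≤ -(∑ j, p j * Real.logb 2 (p j)) := by
      rw [hsum']
      calc (1:ℝ) = ∑ j, p j * 1 := by simp [hsum]
        _ ≤ ∑ j, -(p j * Real.logb 2 (p j)) := by
            refine Finset.sum_le_sum fun j _ => ?_
            have h1 : -(p j * Real.logb 2 (p k₀)) ≤ -(p j * Real.logb 2 (p j)) :=
              aux_neg_mul_logb (hp j) (hk₀' j)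
            have h2 : Real.logb 2 (p k₀) ≤ Real.logb 2 2⁻¹ :=
              Real.logb_le_logb_of_le one_lt_two hMpos hM
            have h3 : Real.logb 2 (2:ℝ)⁻¹ = -1 := by
              rw [Real.logb_inv]; simp
            nlinarith [hp j, h2, h3 ▸ h2]
    have hle1 : Real.binEntropy t / Real.log 2 ≤ 1 := by
      rw [div_le_one hlog2]
      exact Real.binEntropy_le_log_two
    linarith
  · -- case max > 1/2
    set M := p k₀ with hMdef
    have hM1 : M ≤ 1 := by
      have := hsum ▸ Finset.single_le_sum (fun j _ => hp j) (Finset.mem_univ k₀)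
      linarith
    have hMt : M ≤ t := key k₀
    -- entropy ≥ binEntropy M / log 2
    have hrest : ∑ j ∈ univ.erase k₀, p j = 1 - M := by
      have := Finset.add_sum_erase univ p (Finset.mem_univ k₀)
      linarith [this.symm ▸ hsum]
    have hprest : ∀ j ∈ univ.erase k₀, p j ≤ 1 - M := by
      intro j hj
      calc p j ≤ ∑ i ∈ univ.erase k₀, p i :=
            Finset.single_le_sum (fun i _ => hp i) hj
        _ = 1 - M := hrest
    have hstep : Real.binEntropy M / Real.log 2 ≤ -(∑ j, p j * Real.logb 2 (p j)) := by
      rw [hsum', ← Finset.add_sum_erase univ _ (Finset.mem_univ k₀)]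
      have hsum2 : ∑ j ∈ univ.erase k₀, -(p j * Real.logb 2 (1 - M))
          ≤ ∑ j ∈ univ.erase k₀, -(p j * Real.logb 2 (p j)) :=
        Finset.sum_le_sum fun j hj => aux_neg_mul_logb (hp j) (hprest j hj)
      have hsum3 : ∑ j ∈ univ.erase k₀, -(p j * Real.logb 2 (1 - M))
          = -((1 - M) * Real.logb 2 (1 - M)) := by
        rw [Finset.sum_neg_distrib, ← Finset.sum_mul, hrest]
      have hbe : Real.binEntropy M / Real.log 2
          = -(M * Real.logb 2 M) + -((1 - M) * Real.logb 2 (1 - M)) := by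
        rw [Real.binEntropy, Real.log_inv, Real.log_inv, Real.logb, Real.logb]
        field_simp
      rw [hbe]
      linarith [hsum3 ▸ hsum2]
    -- binEntropy t ≤ binEntropy M
    have hanti : Real.binEntropy t ≤ Real.binEntropy M := by
      rcases eq_or_lt_of_le hMt with h | h
      · rw [h]
      · exact (Real.binEntropy_strictAntiOn ⟨hM.le, hM1⟩ ⟨ht12, ht1⟩ h).le
    have : Real.binEntropy t / Real.log 2 ≤ Real.binEntropy M / Real.log 2 :=
      div_le_div_of_nonneg_right hanti hlog2.le |>.trans_eq rfl
    linarith
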